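/- Let H be an N×N Hermitian complex matrix, λ ∈ ℝ, and Δ > 0. Let A be an N×m matrix and A⊥ an N×p matrix with AᴴA = 1, A⊥ᴴA⊥ = 1, A·Aᴴ + A⊥·A⊥ᴴ = 1, and H·A⊥ = A⊥·Λ⊥ for a real diagonal matrix Λ⊥ with |Λ⊥_jj − λ| ≥ Δ for every j. Let B be an N×m matrix with BᴴB = 1 and residual E = H·B − λ·B. Then for every unit vector c ∈ ℂ^m, the state Bc satisfies ‖Aᴴ·(B·c)‖² ≥ 1 − ‖E‖²/Δ²; consequently the worst-case subspace fidelity obeys F_min ≥ 1 − (‖E‖/Δ)². -/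

import Mathlib

open Matrix
open scoped Matrix.Norms.L2Operator

/-- The Euclidean (ℓ²) norm of a complex vector. -/
noncomputable def enorm2 {n : Type*} [Fintype n] (v : n → ℂ) : ℝ :=
  ‖(EuclideanSpace.equiv n ℂ).symm v‖

lemma enorm_nonneg {n : Type*} [Fintype n] (x : n → ℂ) : 0 ≤ enorm2 x := norm_nonneg _

lemma enorm_sq {n : Type*} [Fintype n] (x : n → ℂ) :
    enorm2 x ^ 2 = ∑ i, ‖x i‖ ^ 2 := by
  simp [enorm2, EuclideanSpace.norm_eq,
    Real.sq_sqrt (Finset.sum_nonneg fun i _ => sq_nonneg _)]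

lemma dot_star_self {n : Type*} [Fintype n] (x : n → ℂ) :
    star x ⬝ᵥ x = ((enorm2 x ^ 2 : ℝ) : ℂ) := by
  rw [enorm_sq]
  push_cast
  simp only [dotProduct, Pi.star_apply]
  congr 1; ext i
  rw [Complex.star_def, ← Complex.normSq_eq_conj_mul_self, Complex.normSq_eq_norm_sq]
  simp

lemma dot_mulVec_self {N q : ℕ} (M : Matrix (Fin N) (Fin q) ℂ) (x : Fin N → ℂ) :
    star x ⬝ᵥ ((M * Mᴴ) *ᵥ x) = ((enorm2 (Mᴴ *ᵥ x) ^ 2 : ℝ) : ℂ) := by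
  rw [← dot_star_self, star_mulVec, conjTranspose_conjTranspose, ← mulVec_mulVec,
    dotProduct_mulVec]

lemma pythagoras {N m p : ℕ} (A : Matrix (Fin N) (Fin m) ℂ) (Aperp : Matrix (Fin N) (Fin p) ℂ)
    (hcomplete : A * Aᴴ + Aperp * Aperpᴴ = 1) (x : Fin N → ℂ) :
    enorm2 (Aᴴ *ᵥ x) ^ 2 + enorm2 (Aperpᴴ *ᵥ x) ^ 2 = enorm2 x ^ 2 := by
  have h : star x ⬝ᵥ ((A * Aᴴ) *ᵥ x) + star x ⬝ᵥ ((Aperp * Aperpᴴ) *ᵥ x) = star x ⬝ᵥ x := by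
    rw [← dotProduct_add, ← add_mulVec, hcomplete, one_mulVec]
  rw [dot_mulVec_self, dot_mulVec_self, dot_star_self] at h
  exact_mod_cast h

lemma enorm_mulVec_sq {N q : ℕ} (M : Matrix (Fin N) (Fin q) ℂ) (x : Fin q → ℂ) :
    ((enorm2 (M *ᵥ x) ^ 2 : ℝ) : ℂ) = star x ⬝ᵥ ((Mᴴ * M) *ᵥ x) := by
  have h := dot_mulVec_self Mᴴ x
  rw [conjTranspose_conjTranspose] at h
  exact h.symm

theorem worst_case_subspace_fidelity
    (N m p : ℕ)
    (H : Matrix (Fin N) (Fin N) ℂ) (hH : H.IsHermitian)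
    (lam Δ : ℝ) (hΔ : 0 < Δ)
    (A : Matrix (Fin N) (Fin m) ℂ) (Aperp : Matrix (Fin N) (Fin p) ℂ)
    (hA : Aᴴ * A = 1) (hAperp : Aperpᴴ * Aperp = 1)
    (hcomplete : A * Aᴴ + Aperp * Aperpᴴ = 1)
    (Λperp : Fin p → ℝ)
    (heig : H * Aperp = Aperp * Matrix.diagonal (fun j => (Λperp j : ℂ)))
    (hgap : ∀ j, Δ ≤ |Λperp j - lam|)
    (B : Matrix (Fin N) (Fin m) ℂ) (hB : Bᴴ * B = 1)
    (c : Fin m → ℂ) (hc : enorm2 c = 1) :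
    1 - ‖H * B - (lam : ℂ) • B‖ ^ 2 / Δ ^ 2 ≤ enorm2 (Aᴴ *ᵥ (B *ᵥ c)) ^ 2 := by
  obtain ⟨E, hE⟩ : ∃ E : Matrix (Fin N) (Fin m) ℂ, E = H * B - (lam : ℂ) • B := ⟨_, rfl⟩
  obtain ⟨v, hv⟩ : ∃ v : Fin N → ℂ, v = B *ᵥ c := ⟨_, rfl⟩
  obtain ⟨w, hw⟩ : ∃ w : Fin p → ℂ, w = Aperpᴴ *ᵥ v := ⟨_, rfl⟩
  rw [← hE, ← hv]
  -- the state is normalized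
  have hv1 : enorm2 v ^ 2 = 1 := by
    have h : ((enorm2 v ^ 2 : ℝ) : ℂ) = ((enorm2 c ^ 2 : ℝ) : ℂ) := by
      rw [hv, enorm_mulVec_sq, hB, one_mulVec, dot_star_self]
    rw [hc, one_pow] at h
    exact_mod_cast h
  -- Aperpᴴ H = D Aperpᴴ
  have hAH : Aperpᴴ * H = Matrix.diagonal (fun j => (Λperp j : ℂ)) * Aperpᴴ := by
    have hdiag : (Matrix.diagonal fun j => (Λperp j : ℂ))ᴴ =
        Matrix.diagonal fun j => (Λperp j : ℂ) := by
      have hs : (star fun j => ((Λperp j : ℂ))) = fun j => (Λperp j : ℂ) := by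
        funext j
        simp [Complex.conj_ofReal]
      rw [diagonal_conjTranspose, hs]
    conv_lhs => rw [← hH.eq]
    rw [← conjTranspose_mul, heig, conjTranspose_mul, hdiag]
  -- key residual identity
  have hkey : Aperpᴴ * E =
      Matrix.diagonal (fun j => ((Λperp j : ℂ) - (lam : ℂ))) * (Aperpᴴ * B) := by
    rw [hE, Matrix.mul_sub, Matrix.mul_smul, ← Matrix.mul_assoc, hAH, Matrix.mul_assoc,
      smul_eq_diagonal_mul, ← Matrix.sub_mul, ← diagonal_sub]
  have hu : ∀ j, (Aperpᴴ *ᵥ (E *ᵥ c)) j = ((Λperp j : ℂ) - (lam : ℂ)) * w j := by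
    intro j
    rw [mulVec_mulVec, hkey, ← mulVec_mulVec, mulVec_diagonal, hw, hv, mulVec_mulVec]
  -- gap bound
  have hsum : Δ ^ 2 * enorm2 w ^ 2 ≤ enorm2 (Aperpᴴ *ᵥ (E *ᵥ c)) ^ 2 := by
    rw [enorm_sq, enorm_sq, Finset.mul_sum]
    apply Finset.sum_le_sum
    intro j _
    rw [hu j]
    have hcast : ((Λperp j : ℂ) - (lam : ℂ)) = ((Λperp j - lam : ℝ) : ℂ) := by push_cast; ring
    rw [norm_mul, hcast, Complex.norm_real, Real.norm_eq_abs, mul_pow]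
    have h1 : Δ ^ 2 ≤ |Λperp j - lam| ^ 2 := by
      have := hgap j
      nlinarith [abs_nonneg (Λperp j - lam)]
    nlinarith [sq_nonneg (‖w j‖)]
  -- pythagoras for E c
  have hp2 := pythagoras A Aperp hcomplete (E *ᵥ c)
  have hle2 : enorm2 (Aperpᴴ *ᵥ (E *ᵥ c)) ^ 2 ≤ enorm2 (E *ᵥ c) ^ 2 := by
    nlinarith [sq_nonneg (enorm2 (Aᴴ *ᵥ (E *ᵥ c)))]
  -- operator norm bound
  have hop : enorm2 (E *ᵥ c) ≤ ‖E‖ := by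
    have h := Matrix.l2_opNorm_mulVec E ((EuclideanSpace.equiv (Fin m) ℂ).symm c)
    have hcn : ‖(EuclideanSpace.equiv (Fin m) ℂ).symm c‖ = 1 := hc
    calc enorm2 (E *ᵥ c) ≤ ‖E‖ * ‖(EuclideanSpace.equiv (Fin m) ℂ).symm c‖ := h
    _ = ‖E‖ := by rw [hcn, mul_one]
  have hop2 : enorm2 (E *ᵥ c) ^ 2 ≤ ‖E‖ ^ 2 := by
    nlinarith [enorm_nonneg (E *ᵥ c)]
  -- combine
  have hp1 := pythagoras A Aperp hcomplete v
  rw [hv1, ← hw] at hp1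
  have hw2 : enorm2 w ^ 2 ≤ ‖E‖ ^ 2 / Δ ^ 2 := by
    rw [le_div_iff₀ (by positivity)]
    calc enorm2 w ^ 2 * Δ ^ 2 = Δ ^ 2 * enorm2 w ^ 2 := mul_comm _ _
    _ ≤ enorm2 (Aperpᴴ *ᵥ (E *ᵥ c)) ^ 2 := hsum
    _ ≤ enorm2 (E *ᵥ c) ^ 2 := hle2
    _ ≤ ‖E‖ ^ 2 := hop2
  linarith
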